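/- Let t₀ > 0, 1 ≤ p < ∞, and let v ∈ L_p((0, t₀) × ℝ^{n+1}). Then for every η > 0 there exists ρ > 0 such that for every continuous function g : [0, t₀] × ℝⁿ → ℝ with sup_{(t,x)} |g(t,x)| < ρ one has ∫₀^{t₀} ‖ v(t, ·, · − g(t, ·)) − v(t, ·, ·) ‖_{L_p(ℝ^{n+1})}^p dt ≤ η, where v(t, x, y − g(t,x)) denotes the composition of v(t, ·, ·) with the shear map (x, y) ↦ (x, y − g(t, x)). -/

import Mathlib

open MeasureTheory
open scoped ENNReal

lemma shear_mp (n : ℕ) (μt : Measure ℝ) [SigmaFinite μt] (g : ℝ → EuclideanSpace ℝ (Fin n) → ℝ)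
    (hg : Continuous (fun q : ℝ × EuclideanSpace ℝ (Fin n) => g q.1 q.2)) :
    MeasurePreserving
      (fun z : ℝ × (EuclideanSpace ℝ (Fin n) × ℝ) => (z.1, (z.2.1, z.2.2 - g z.1 z.2.1)))
      (μt.prod volume) (μt.prod volume) := by
  have hgm : Measurable fun q : ℝ × EuclideanSpace ℝ (Fin n) => g q.1 q.2 := hg.measurable
  have h1 : ∀ t : ℝ, Measure.map (fun q : EuclideanSpace ℝ (Fin n) × ℝ => (q.1, q.2 - g t q.1))
      volume = volume := by
    intro t
    have hgt : Continuous (g t) := hg.comp (Continuous.prodMk_right t)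
    have : MeasurePreserving (fun q : EuclideanSpace ℝ (Fin n) × ℝ => (q.1, q.2 - g t q.1))
        (volume.prod volume) (volume.prod volume) :=
      (MeasurePreserving.id volume).skew_product (g := fun x y => y - g t x)
        (measurable_snd.sub (hgt.measurable.comp measurable_fst))
        (ae_of_all _ fun x => (measurePreserving_sub_right volume (g t x)).map_eq)
    rw [← Measure.volume_eq_prod] at this
    exact this.map_eq
  have hm : Measurable (Function.uncurry fun (t : ℝ) (q : EuclideanSpace ℝ (Fin n) × ℝ) =>
      (q.1, q.2 - g t q.1)) := by
    apply Measurable.prodMk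
    · exact measurable_snd.fst
    · exact measurable_snd.snd.sub (hgm.comp (measurable_fst.prodMk measurable_snd.fst))
  exact (MeasurePreserving.id μt).skew_product (f := id)
      (g := fun (t : ℝ) (q : EuclideanSpace ℝ (Fin n) × ℝ) => (q.1, q.2 - g t q.1)) hm
      (ae_of_all _ h1)

lemma pow_eLpNorm_eq {α : Type*} [MeasurableSpace α] (μ : Measure α) (p : ℝ) (hp : 1 ≤ p)
    (f : α → ℝ) :
    eLpNorm f (ENNReal.ofReal p) μ ^ p = ∫⁻ x, (‖f x‖₊ : ℝ≥0∞) ^ p ∂μ := by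
  have hp0 : 0 < p := lt_of_lt_of_le one_pos hp
  rw [eLpNorm_eq_lintegral_rpow_enorm_toReal (by simp [hp0]) ENNReal.ofReal_ne_top,
    ENNReal.toReal_ofReal hp0.le, ← ENNReal.rpow_mul, one_div, inv_mul_cancel₀ hp0.ne',
    ENNReal.rpow_one]
  simp only [enorm_eq_nnnorm]

lemma shear_small (n : ℕ) (p : ℝ) (hp : 1 ≤ p)
    (V : ℝ × (EuclideanSpace ℝ (Fin n) × ℝ) → ℝ)
    (hV : MemLp V (ENNReal.ofReal p) volume) {η : ℝ≥0∞} (hη : η ≠ 0) :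
    ∃ ρ > (0:ℝ), ∀ g : ℝ → EuclideanSpace ℝ (Fin n) → ℝ,
      Continuous (fun q : ℝ × EuclideanSpace ℝ (Fin n) => g q.1 q.2) →
      (∀ t x, |g t x| < ρ) →
      eLpNorm (fun z : ℝ × (EuclideanSpace ℝ (Fin n) × ℝ) =>
        V (z.1, (z.2.1, z.2.2 - g z.1 z.2.1)) - V z) (ENNReal.ofReal p) volume ≤ η := by
  have hp0 : 0 < p := lt_of_lt_of_le one_pos hp
  have hp1 : (1:ℝ≥0∞) ≤ ENNReal.ofReal p := ENNReal.one_le_ofReal.2 hp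
  haveI : (volume : Measure (ℝ × (EuclideanSpace ℝ (Fin n) × ℝ))).Regular :=
    Measure.Regular.of_sigmaCompactSpace_of_isLocallyFiniteMeasure _
  set δ := η / 4 with hδdef
  have hδ0 : δ ≠ 0 := by
    simp only [hδdef, ne_eq, ENNReal.div_eq_zero_iff]
    push_neg
    exact ⟨hη, by norm_num⟩
  have h4 : δ * 4 = η := ENNReal.div_mul_cancel (by norm_num) (by norm_num)
  have h3δ : δ + (δ + δ) ≤ η := by
    rw [← h4]
    calc δ + (δ + δ) = δ * 3 := by ring
      _ ≤ δ * 4 := by gcongr <;> norm_num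
  obtain ⟨w, hw_supp, hw_close, hw_cont, hw_mem⟩ :=
    hV.exists_hasCompactSupport_eLpNorm_sub_le ENNReal.ofReal_ne_top hδ0
  set K := Metric.cthickening 1 (tsupport w) with hKdef
  have hKc : IsCompact K := hw_supp.cthickening
  have hKm : MeasurableSet K := Metric.isClosed_cthickening.measurableSet
  have hKvol : volume K ≠ ∞ := hKc.measure_lt_top.ne
  set C := volume K ^ (1/p) + 1 with hCdef
  have hC0 : C ≠ 0 := by
    simp only [hCdef, ne_eq, add_eq_zero, one_ne_zero, and_false, not_false_iff]
  have hCt : C ≠ ∞ := by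
    simp only [hCdef, ne_eq, ENNReal.add_eq_top, ENNReal.one_ne_top, or_false]
    exact ENNReal.rpow_ne_top_of_nonneg (by positivity) hKvol
  have hCK : volume K ^ (1/p) ≤ C := le_self_add
  have hdiv0 : δ / C ≠ 0 := by
    simp only [ne_eq, ENNReal.div_eq_zero_iff]
    push_neg
    exact ⟨hδ0, hCt⟩
  have hmin0 : min (δ/C) 1 ≠ 0 :=
    (lt_min (pos_iff_ne_zero.2 hdiv0) one_pos).ne'
  have hmint : min (δ/C) 1 ≠ ∞ := ne_top_of_le_ne_top ENNReal.one_ne_top (min_le_right _ _)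
  set δ' := (min (δ / C) 1).toReal with hδ'def
  have hδ'0 : 0 < δ' := ENNReal.toReal_pos hmin0 hmint
  have hδ'le : ENNReal.ofReal δ' ≤ δ / C := by
    rw [hδ'def, ENNReal.ofReal_toReal hmint]
    exact min_le_left _ _
  have hwu : UniformContinuous w :=
    hw_cont.uniformContinuous_of_tendsto_cocompact hw_supp.is_zero_at_infty
  rw [Metric.uniformContinuous_iff] at hwu
  obtain ⟨ρ0, hρ00, hρ0⟩ := hwu δ' hδ'0
  refine ⟨min ρ0 1, lt_min hρ00 one_pos, ?_⟩
  intro g hgc hgb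
  set S := fun z : ℝ × (EuclideanSpace ℝ (Fin n) × ℝ) =>
    (z.1, (z.2.1, z.2.2 - g z.1 z.2.1)) with hSdef
  have hSmp : MeasurePreserving S volume volume := by
    rw [Measure.volume_eq_prod]
    exact shear_mp n volume g hgc
  have hScont : Continuous S := by
    apply continuous_fst.prodMk
    apply (continuous_snd.fst).prodMk
    exact continuous_snd.snd.sub (hgc.comp (continuous_fst.prodMk continuous_snd.fst))
  have hdistS : ∀ z, dist (S z) z = |g z.1 z.2.1| := by
    intro z
    simp only [hSdef, Prod.dist_eq, Real.dist_eq, dist_self, sub_sub_cancel_left, abs_neg]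
    rw [max_eq_right, max_eq_right] <;> simp [abs_nonneg, dist_self]
  have hbound : ∀ z, ‖w (S z) - w z‖ ≤ δ' := by
    intro z
    have h1 : dist (S z) z < ρ0 := by
      rw [hdistS z]
      exact lt_of_lt_of_le (hgb _ _) (min_le_left _ _)
    have h2 := hρ0 h1
    rw [Real.dist_eq] at h2
    exact le_of_lt h2
  have hsupp0 : ∀ z ∉ K, w (S z) - w z = 0 := by
    intro z hz
    have h1 : w z = 0 :=
      image_eq_zero_of_notMem_tsupport (fun h => hz (Metric.self_subset_cthickening _ h))
    have h2 : w (S z) = 0 := by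
      by_contra h2
      have hS : S z ∈ tsupport w := subset_tsupport w h2
      refine hz (Metric.mem_cthickening_of_dist_le z (S z) 1 _ hS ?_)
      rw [dist_comm, hdistS]
      exact le_of_lt (lt_of_lt_of_le (hgb _ _) (min_le_right _ _))
    rw [h1, h2, sub_zero]
  have hmid : eLpNorm (fun z => w (S z) - w z) (ENNReal.ofReal p) volume ≤ δ := by
    have heq : (fun z => w (S z) - w z) = K.indicator (fun z => w (S z) - w z) := by
      ext z
      by_cases hz : z ∈ K
      · rw [Set.indicator_of_mem hz]
      · rw [Set.indicator_of_notMem hz, hsupp0 z hz]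
    rw [heq, eLpNorm_indicator_eq_eLpNorm_restrict hKm]
    calc eLpNorm (fun z => w (S z) - w z) (ENNReal.ofReal p) (volume.restrict K)
        ≤ (volume.restrict K) Set.univ ^ (ENNReal.ofReal p).toReal⁻¹ * ENNReal.ofReal δ' :=
          eLpNorm_le_of_ae_bound (ae_of_all _ hbound)
      _ ≤ C * (δ / C) := by
          refine mul_le_mul' ?_ hδ'le
          rw [Measure.restrict_apply_univ, ENNReal.toReal_ofReal hp0.le, ← one_div]
          exact hCK
      _ = δ := ENNReal.mul_div_cancel' (fun h => absurd h hC0) (fun h => absurd h hCt)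
  have hVw : AEStronglyMeasurable (fun z => V z - w z) volume := (hV.sub hw_mem).1
  have hVwS : AEStronglyMeasurable (fun z => V (S z) - w (S z)) volume :=
    hVw.comp_quasiMeasurePreserving hSmp.quasiMeasurePreserving
  have hwS : AEStronglyMeasurable (fun z => w (S z) - w z) volume :=
    ((hw_cont.comp hScont).sub hw_cont).aestronglyMeasurable
  have hwV : AEStronglyMeasurable (fun z => w z - V z) volume := (hw_mem.sub hV).1
  have hdecomp : (fun z => V (S z) - V z)
      = (fun z => (V (S z) - w (S z)) + ((w (S z) - w z) + (w z - V z))) := by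
    ext z; ring
  have hterm1 : eLpNorm (fun z => V (S z) - w (S z)) (ENNReal.ofReal p) volume ≤ δ := by
    have : eLpNorm ((fun z => V z - w z) ∘ S) (ENNReal.ofReal p) volume
        = eLpNorm (fun z => V z - w z) (ENNReal.ofReal p) volume :=
      eLpNorm_comp_measurePreserving hVw hSmp
    calc eLpNorm (fun z => V (S z) - w (S z)) (ENNReal.ofReal p) volume
        = eLpNorm (fun z => V z - w z) (ENNReal.ofReal p) volume := this
      _ ≤ δ := hw_close
  have hterm3 : eLpNorm (fun z => w z - V z) (ENNReal.ofReal p) volume ≤ δ := by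
    have : eLpNorm (fun z => w z - V z) (ENNReal.ofReal p) volume
        = eLpNorm (fun z => V z - w z) (ENNReal.ofReal p) volume := eLpNorm_sub_comm w V (ENNReal.ofReal p) volume
    rw [this]
    exact hw_close
  calc eLpNorm (fun z => V (S z) - V z) (ENNReal.ofReal p) volume
      = eLpNorm (fun z => (V (S z) - w (S z)) + ((w (S z) - w z) + (w z - V z)))
        (ENNReal.ofReal p) volume := by rw [hdecomp]
    _ ≤ eLpNorm (fun z => V (S z) - w (S z)) (ENNReal.ofReal p) volume
        + eLpNorm (fun z => (w (S z) - w z) + (w z - V z)) (ENNReal.ofReal p) volume :=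
          eLpNorm_add_le hVwS (hwS.add hwV) hp1
    _ ≤ eLpNorm (fun z => V (S z) - w (S z)) (ENNReal.ofReal p) volume
        + (eLpNorm (fun z => w (S z) - w z) (ENNReal.ofReal p) volume
          + eLpNorm (fun z => w z - V z) (ENNReal.ofReal p) volume) := by
          gcongr
          exact eLpNorm_add_le hwS hwV hp1
    _ ≤ δ + (δ + δ) := add_le_add hterm1 (add_le_add hmid hterm3)
    _ ≤ η := h3δ

/-- **Continuity of composition with small shears in `L_p((0,t₀) × ℝ^{n+1})`
(property (3.21), `Lpshift`).** Let `v ∈ L_p((0,t₀) × ℝ^{n+1})`, `1 ≤ p < ∞`. Then for every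
`η > 0` there is `ρ > 0` such that for every continuous `g : [0,t₀] × ℝⁿ → ℝ` with
`sup |g| < ρ` one has `∫₀^{t₀} ‖v(t,·,· − g(t,·)) − v(t,·,·)‖_{L_p}^p dt ≤ η`. -/
theorem stmt_16 (n : ℕ) (t₀ : ℝ) (ht₀ : 0 < t₀) (p : ℝ) (hp : 1 ≤ p)
    (v : ℝ → EuclideanSpace ℝ (Fin n) × ℝ → ℝ)
    (hv_mem : MemLp (fun q : ℝ × (EuclideanSpace ℝ (Fin n) × ℝ) => v q.1 q.2)
      (ENNReal.ofReal p)
      ((volume.restrict (Set.Ioo (0 : ℝ) t₀)).prod volume)) :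
    ∀ η > (0 : ℝ), ∃ ρ > (0 : ℝ), ∀ g : ℝ → EuclideanSpace ℝ (Fin n) → ℝ,
      Continuous (fun q : ℝ × EuclideanSpace ℝ (Fin n) => g q.1 q.2) →
      (∀ t x, |g t x| < ρ) →
      (∫⁻ t in Set.Ioo (0 : ℝ) t₀,
          (eLpNorm (fun q : EuclideanSpace ℝ (Fin n) × ℝ =>
              v t (q.1, q.2 - g t q.1) - v t q) (ENNReal.ofReal p) volume) ^ p)
        ≤ ENNReal.ofReal η := by
  intro η hη
  have hp0 : 0 < p := lt_of_lt_of_le one_pos hp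
  set s : Set (ℝ × (EuclideanSpace ℝ (Fin n) × ℝ)) := (Set.Ioo (0:ℝ) t₀) ×ˢ Set.univ with hsdef
  have hs : MeasurableSet s := measurableSet_Ioo.prod MeasurableSet.univ
  set μr : Measure (ℝ × (EuclideanSpace ℝ (Fin n) × ℝ)) :=
    (volume.restrict (Set.Ioo (0:ℝ) t₀)).prod volume with hμrdef
  have hμ : μr = (volume : Measure (ℝ × (EuclideanSpace ℝ (Fin n) × ℝ))).restrict s := by
    have h := Measure.prod_restrict (μ := (volume : Measure ℝ))
      (ν := (volume : Measure (EuclideanSpace ℝ (Fin n) × ℝ))) (Set.Ioo 0 t₀) Set.univ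
    rw [Measure.restrict_univ] at h
    rw [hμrdef, hsdef, h, ← Measure.volume_eq_prod]
  set V : ℝ × (EuclideanSpace ℝ (Fin n) × ℝ) → ℝ := fun z => v z.1 z.2 with hVdef
  set Vt := s.indicator V with hVtdef
  have hVt_mem : MemLp Vt (ENNReal.ofReal p) volume := by
    constructor
    · rw [hVtdef, aestronglyMeasurable_indicator_iff hs, ← hμ]
      exact hv_mem.1
    · rw [hVtdef, eLpNorm_indicator_eq_eLpNorm_restrict hs, ← hμ]
      exact hv_mem.2
  set η' := (ENNReal.ofReal η) ^ (1/p) with hη'def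
  have hη'0 : η' ≠ 0 := by
    rw [hη'def]
    simp only [ne_eq, ENNReal.rpow_eq_zero_iff, not_or, not_and]
    constructor
    · intro h; exact absurd h (by simp [ENNReal.ofReal_eq_zero, not_le, hη])
    · intro h; exact absurd h ENNReal.ofReal_ne_top
  obtain ⟨ρ, hρ0, hρ⟩ := shear_small n p hp Vt hVt_mem hη'0
  refine ⟨ρ, hρ0, ?_⟩
  intro g hgc hgb
  set S := fun z : ℝ × (EuclideanSpace ℝ (Fin n) × ℝ) =>
    (z.1, (z.2.1, z.2.2 - g z.1 z.2.1)) with hSdef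
  have hSmp : MeasurePreserving S μr μr := shear_mp n _ g hgc
  have hmemS : ∀ z, S z ∈ s ↔ z ∈ s := by
    intro z
    simp [hsdef, hSdef, Set.mem_prod]
  have hae : (fun z => V (S z) - V z) =ᵐ[μr] (fun z => Vt (S z) - Vt z) := by
    rw [hμ]
    filter_upwards [ae_restrict_mem hs] with z hz
    rw [hVtdef, Set.indicator_of_mem hz V, Set.indicator_of_mem ((hmemS z).2 hz) V]
  have hVt_ae : AEStronglyMeasurable Vt μr := by
    rw [hμ]
    exact hVt_mem.1.restrict
  have hVtS_ae : AEStronglyMeasurable (fun z => Vt (S z)) μr :=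
    hVt_ae.comp_quasiMeasurePreserving hSmp.quasiMeasurePreserving
  have hD_ae : AEStronglyMeasurable (fun z => Vt (S z) - Vt z) μr := hVtS_ae.sub hVt_ae
  have hF_ae : AEMeasurable
      (fun z : ℝ × (EuclideanSpace ℝ (Fin n) × ℝ) => (‖V (S z) - V z‖₊ : ℝ≥0∞) ^ p) μr := by
    refine AEMeasurable.pow ?_ aemeasurable_const
    refine AEMeasurable.congr hD_ae.enorm ?_
    filter_upwards [hae] with z hz
    rw [hz, enorm_eq_nnnorm]
  calc (∫⁻ t in Set.Ioo (0 : ℝ) t₀,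
          (eLpNorm (fun q : EuclideanSpace ℝ (Fin n) × ℝ =>
              v t (q.1, q.2 - g t q.1) - v t q) (ENNReal.ofReal p) volume) ^ p)
      = ∫⁻ t in Set.Ioo (0 : ℝ) t₀,
          ∫⁻ q, (‖V (S (t, q)) - V (t, q)‖₊ : ℝ≥0∞) ^ p ∂volume := by
        refine lintegral_congr fun t => ?_
        exact pow_eLpNorm_eq volume p hp _
    _ = ∫⁻ z, (‖V (S z) - V z‖₊ : ℝ≥0∞) ^ p ∂μr := (lintegral_prod _ hF_ae).symm
    _ = ∫⁻ z, (‖Vt (S z) - Vt z‖₊ : ℝ≥0∞) ^ p ∂μr := by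
        refine lintegral_congr_ae ?_
        filter_upwards [hae] with z hz
        rw [hz]
    _ = eLpNorm (fun z => Vt (S z) - Vt z) (ENNReal.ofReal p) μr ^ p :=
        (pow_eLpNorm_eq μr p hp _).symm
    _ ≤ eLpNorm (fun z => Vt (S z) - Vt z) (ENNReal.ofReal p) volume ^ p := by
        refine ENNReal.rpow_le_rpow ?_ hp0.le
        refine eLpNorm_mono_measure _ ?_
        rw [hμ]
        exact Measure.restrict_le_self
    _ ≤ η' ^ p := ENNReal.rpow_le_rpow (hρ g hgc hgb) hp0.le
    _ = ENNReal.ofReal η := by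
        rw [hη'def, ← ENNReal.rpow_mul, one_div, inv_mul_cancel₀ hp0.ne', ENNReal.rpow_one]
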